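/- Let J be the Jacobian of a genus-g curve over K, θ a theta characteristic, l an odd prime different from char K, and for u ∈ J[l] let θ_u be the canonical theta function: the unique function with divisor l(W_{−θ+u} − W_{−θ}) satisfying θ_u · (θ_u ∘ t_u) · ... · (θ_u ∘ t_{(l−1)u}) = 1 and θ_u ∘ [−1] = (θ_u ∘ t_u)^{−1}. Then θ_{−u} = θ_u ∘ [−1]. -/
import Mathlib


/-- `θ_{−u} = θ_u ∘ [−1]` for canonical theta functions.

`J` is the Jacobian (its points), `WΘ u` is the translated theta divisor `W_{−θ+u}`
(so `WΘ 0 = W_{−θ}`, which is symmetric by `hWsym`). Divisors on `J` are modeled as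
formal `ℤ`-combinations of subsets, `dv` is the divisor map, and `hdvneg` expresses the
behaviour of divisors under pullback by `[−1]`. A function `θu` is the canonical theta
function for `u ∈ J[l]` iff it has divisor `l(W_{−θ+u} − W_{−θ})` and satisfies
`θ_u·(θ_u∘t_u)·⋯·(θ_u∘t_{(l−1)u}) = 1` and `θ_u∘[−1] = (θ_u∘t_u)^{−1}`; it exists and
is unique (`huniq`, from the context). -/
theorem stmt10 {K J : Type*} [Field K] [AddCommGroup J] (g : ℕ) (hg : 2 ≤ g)
    (l : ℕ) (hl : l.Prime) (hlodd : Odd l)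
    (WΘ : J → Set J)
    (hWsym : ∀ u : J, (fun x : J => -x) ⁻¹' (WΘ u) = WΘ (-u))
    (dv : (J → K) → ((Set J) →₀ ℤ))
    (hdvneg : ∀ φ : J → K,
      dv (fun x => φ (-x)) = (dv φ).mapDomain fun S => (fun x : J => -x) ⁻¹' S)
    (canonical : J → (J → K) → Prop)
    (hcanonical : ∀ (u : J) (θu : J → K), canonical u θu ↔
      (dv θu = (l : ℤ) • (Finsupp.single (WΘ u) 1 - Finsupp.single (WΘ 0) 1) ∧
        (∀ x : J, ∏ k ∈ Finset.range l, θu (x - k • u) = 1) ∧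
        (∀ x : J, θu (-x) = (θu (x + u))⁻¹)))
    (huniq : ∀ (u : J) (θu θu' : J → K), canonical u θu → canonical u θu' → θu = θu')
    (u : J) (hu : l • u = 0) (θu θmu : J → K)
    (hθu : canonical u θu) (hθmu : canonical (-u) θmu) :
    θmu = fun x => θu (-x) := by
  obtain ⟨hd, hp, hs⟩ := (hcanonical u θu).mp hθu
  refine huniq (-u) θmu _ hθmu ((hcanonical (-u) _).mpr ⟨?_, ?_, ?_⟩)
  · rw [hdvneg, hd, Finsupp.mapDomain_smul,
      ← Finsupp.mapDomain.addMonoidHom_apply, map_sub]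
    simp only [Finsupp.mapDomain.addMonoidHom_apply, Finsupp.mapDomain_single]
    rw [hWsym, hWsym, neg_zero]
  · intro x
    have := hp (-x)
    simpa [sub_eq_add_neg, neg_add, smul_neg, add_comm] using this
  · intro x
    have := hs (-x)
    simpa [sub_eq_add_neg, add_comm] using this
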